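/- Let G be a complete (finite simple) graph and let 𝒳 = {(s_1,t_1),…,(s_k,t_k)} be a multiset of k pairs of distinct vertices of G. If |V(G)| > k, then (G,𝒳,k) is a Yes-instance of EDP; that is, there exist k pairwise edge-disjoint paths P_1,…,P_k in G such that P_i has endpoints s_i and t_i for every i ∈ {1,…,k}. -/

import Mathlib

open SimpleGraph Finset

/-- A family of walks in `G` connecting the terminal pairs `X`. -/
abbrev WalkFamily {V : Type*} (G : SimpleGraph V) {ι : Type*} (X : ι → V × V) :=
  ∀ i : ι, G.Walk (X i).1 (X i).2

/-- The walks in the family are pairwise edge-disjoint. -/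
def PairwiseEdgeDisjoint {V : Type*} (G : SimpleGraph V) {ι : Type*} (X : ι → V × V)
    (P : WalkFamily G X) : Prop :=
  ∀ i j : ι, i ≠ j → ∀ e : Sym2 V, e ∈ (P i).edges → e ∉ (P j).edges

/-- A solution of the Edge-Disjoint Paths (EDP) instance `(G, X)`: a family of paths
connecting the terminal pairs that are pairwise edge-disjoint. -/
def IsEDPSolution {V : Type*} (G : SimpleGraph V) {ι : Type*} (X : ι → V × V)
    (P : WalkFamily G X) : Prop :=
  (∀ i, (P i).IsPath) ∧ PairwiseEdgeDisjoint G X P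

/-- `(G, X)` is a Yes-instance of EDP. -/
def EDPYes {V : Type*} (G : SimpleGraph V) {ι : Type*} (X : ι → V × V) : Prop :=
  ∃ P : WalkFamily G X, IsEDPSolution G X P

theorem edp_top_aux.{u} (k : ℕ) : ∀ {V : Type u} [Fintype V] (X : Fin k → V × V),
    (∀ i, (X i).1 ≠ (X i).2) → k < Fintype.card V →
    EDPYes (⊤ : SimpleGraph V) X := by
  induction k with
  | zero =>
    intro V _ X hX hcard
    exact ⟨fun i => i.elim0, fun i => i.elim0, fun i => i.elim0⟩
  | succ k ih =>
    intro V _ X hX hcard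
    classical
    -- find a vertex `w` that is a terminal of at most one demand
    obtain ⟨w, hw⟩ : ∃ w : V,
        ((univ : Finset (Fin (k+1))).filter
          (fun i => (X i).1 = w ∨ (X i).2 = w)).card ≤ 1 := by
      by_contra h
      push_neg at h
      have h1 : Fintype.card V • 2 ≤
          ∑ v : V, ((univ : Finset (Fin (k+1))).filter
            (fun i => (X i).1 = v ∨ (X i).2 = v)).card := by
        rw [← Finset.card_univ]
        exact Finset.card_nsmul_le_sum _ _ _ (fun v _ => h v)
      have h2 : ∑ v : V, ((univ : Finset (Fin (k+1))).filter
            (fun i => (X i).1 = v ∨ (X i).2 = v)).card = (k+1) * 2 := by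
        simp_rw [Finset.card_filter]
        rw [Finset.sum_comm]
        have : ∀ i : Fin (k+1),
            (∑ v : V, if (X i).1 = v ∨ (X i).2 = v then 1 else 0) = 2 := by
          intro i
          rw [← Finset.card_filter]
          have : (univ : Finset V).filter (fun v => (X i).1 = v ∨ (X i).2 = v)
              = {(X i).1, (X i).2} := by
            ext v; simp [eq_comm, or_comm]
          rw [this, Finset.card_pair (hX i)]
        simp [this]
      rw [h2, smul_eq_mul] at h1
      omega
    -- a special demand `i0` routed by a path `Q` all of whose edges contain `w`,
    -- such that all other demands avoid `w`
    obtain ⟨i0, Q, hQp, hQw, hoth⟩ : ∃ (i0 : Fin (k+1))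
        (Q : (⊤ : SimpleGraph V).Walk (X i0).1 (X i0).2), Q.IsPath ∧
        (∀ e ∈ Q.edges, w ∈ e) ∧
        (∀ j, j ≠ i0 → (X j).1 ≠ w ∧ (X j).2 ≠ w) := by
      by_cases hD : ∃ i : Fin (k+1), (X i).1 = w ∨ (X i).2 = w
      · obtain ⟨i0, hi0⟩ := hD
        refine ⟨i0, Walk.cons (by simp [hX i0]) Walk.nil, by simp [hX i0], ?_, ?_⟩
        · intro e he
          simp only [Walk.edges_cons, Walk.edges_nil, List.mem_singleton] at he
          subst he
          rcases hi0 with h | h <;> rw [← h] <;> [exact Sym2.mem_mk_left _ _; exact Sym2.mem_mk_right _ _]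
        · intro j hj
          have hmem : i0 ∈ (univ : Finset (Fin (k+1))).filter
              (fun i => (X i).1 = w ∨ (X i).2 = w) := by simp [hi0]
          constructor <;> intro h <;> refine hj (Finset.card_le_one.mp hw j ?_ i0 hmem) <;>
            simp [h]
      · push_neg at hD
        have h1 : (X 0).1 ≠ w := (hD 0).1
        have h2 : (X 0).2 ≠ w := (hD 0).2
        refine ⟨0, Walk.cons ((top_adj _ _).2 h1)
          (Walk.cons ((top_adj _ _).2 (Ne.symm h2)) Walk.nil), ?_, ?_, fun j _ => hD j⟩
        · simp [Walk.isPath_def, h1, h2, hX 0, (hX 0).symm, Ne.symm h1, Ne.symm h2]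
        · intro e he
          simp only [Walk.edges_cons, Walk.edges_nil, List.mem_cons,
            List.mem_singleton, List.not_mem_nil, or_false] at he
          rcases he with rfl | rfl <;> simp
    -- the remaining demands, on the vertex set without `w`
    set V' := {v : V // v ≠ w} with hV'
    have hne : ∀ (j : Fin k), i0.succAbove j ≠ i0 := fun j => Fin.succAbove_ne i0 j
    set X' : Fin k → V' × V' := fun j =>
      (⟨(X (i0.succAbove j)).1, (hoth _ (hne j)).1⟩,
       ⟨(X (i0.succAbove j)).2, (hoth _ (hne j)).2⟩) with hX'def
    have hX' : ∀ j, (X' j).1 ≠ (X' j).2 := by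
      intro j h
      exact hX (i0.succAbove j) (congrArg Subtype.val h)
    have hcard' : k < Fintype.card V' := by
      have h1 : Fintype.card V' = Fintype.card V - Fintype.card {v : V // v = w} :=
        Fintype.card_subtype_compl _
      rw [Fintype.card_subtype_eq] at h1
      omega
    obtain ⟨P', hP'path, hP'disj⟩ := ih X' hX' hcard'
    -- map the paths back into `V`
    set f : V' ↪ V := Function.Embedding.subtype _ with hf
    have hfinj : Function.Injective f := f.injective
    set emb : (⊤ : SimpleGraph V') ↪g (⊤ : SimpleGraph V) :=
      SimpleGraph.Embedding.completeGraph f with hemb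
    set PP : ∀ j : Fin k,
        (⊤ : SimpleGraph V).Walk (X (i0.succAbove j)).1 (X (i0.succAbove j)).2 :=
      fun j => ((P' j).map emb.toHom).copy rfl rfl with hPPdef
    have hPPpath : ∀ j, (PP j).IsPath := by
      intro j
      change ((P' j).map emb.toHom).IsPath
      exact Walk.map_isPath_of_injective emb.injective (hP'path j)
    have hPPavoid : ∀ (j : Fin k) (e : Sym2 V), e ∈ (PP j).edges → w ∉ e := by
      intro j e he hwe
      change e ∈ ((P' j).map emb.toHom).edges at he
      rw [Walk.edges_map, List.mem_map] at he
      obtain ⟨a, _, rfl⟩ := he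
      rw [Sym2.mem_map] at hwe
      obtain ⟨x, _, hxw⟩ := hwe
      exact x.2 hxw
    have hPPdisj : ∀ j j' : Fin k, j ≠ j' → ∀ e : Sym2 V,
        e ∈ (PP j).edges → e ∉ (PP j').edges := by
      intro j j' hjj e he he'
      change e ∈ ((P' j).map emb.toHom).edges at he
      change e ∈ ((P' j').map emb.toHom).edges at he'
      rw [Walk.edges_map, List.mem_map] at he he'
      obtain ⟨a, ha, rfl⟩ := he
      obtain ⟨b, hb, hba⟩ := he'
      have : b = a := Sym2.map.injective emb.injective hba
      subst this
      exact hP'disj j j' hjj _ ha hb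
    refine ⟨Fin.insertNth i0 Q PP, ?_, ?_⟩
    · intro i
      by_cases h : i = i0
      · subst h; rw [Fin.insertNth_apply_same]; exact hQp
      · obtain ⟨j, rfl⟩ := Fin.exists_succAbove_eq h
        rw [Fin.insertNth_apply_succAbove]
        exact hPPpath j
    · intro i i' hii e he he'
      by_cases h : i = i0
      · subst h
        rw [Fin.insertNth_apply_same] at he
        obtain ⟨j, rfl⟩ := Fin.exists_succAbove_eq (Ne.symm hii)
        rw [Fin.insertNth_apply_succAbove] at he'
        exact hPPavoid j e he' (hQw e he)
      · obtain ⟨j, rfl⟩ := Fin.exists_succAbove_eq h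
        rw [Fin.insertNth_apply_succAbove] at he
        by_cases h' : i' = i0
        · subst h'
          rw [Fin.insertNth_apply_same] at he'
          exact hPPavoid j e he (hQw e he')
        · obtain ⟨j', rfl⟩ := Fin.exists_succAbove_eq h'
          rw [Fin.insertNth_apply_succAbove] at he'
          have hjj : j ≠ j' := fun hEq => hii (by rw [hEq])
          exact hPPdisj j j' hjj e he he'

/-- If `G` is a complete graph on more than `k` vertices, then every EDP
instance on `G` with `k` terminal pairs (of distinct vertices) is a Yes-instance. -/
theorem edp_complete_graph_yes {V : Type*} [Fintype V] (G : SimpleGraph V)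
    (hcomplete : ∀ x y : V, x ≠ y → G.Adj x y)
    {k : ℕ} (X : Fin k → V × V) (hX : ∀ i, (X i).1 ≠ (X i).2)
    (hcard : k < Fintype.card V) :
    EDPYes G X := by
  have hG : G = ⊤ := by
    ext x y
    exact ⟨fun h => h.ne, fun h => hcomplete x y h⟩
  subst hG
  exact edp_top_aux k X hX hcard
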